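/- Consider one inner loop of SARAH (SARAH-IN) with each f_i L-smooth, P τ-gradient dominated, learning rate η ≤ 2 / ( L ( sqrt(1 + (4m/b)·((n−b)/(n−1))) + 1 ) ), and output w̃ equal to w_t with t chosen uniformly at random from {0,1,...,m}. Then E[||∇P(w̃)||²] ≤ (2τ/(η(m+1)))·||∇P(w_0)||². -/

import Mathlib

open scoped BigOperators

noncomputable section

/-- Vectors in `ℝ^d`. -/
abbrev Vec (d : ℕ) := EuclideanSpace ℝ (Fin d)

/-- The type of mini-batches of size `b` from `{1,…,n}` (modeled as `Fin n`). -/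
def Batch (n b : ℕ) : Type := {s : Finset (Fin n) // s.card = b}

instance (n b : ℕ) : Fintype (Batch n b) :=
  inferInstanceAs (Fintype {s : Finset (Fin n) // s.card = b})

/-- Expectation (uniform average) over a finite sample space. -/
def expec {Ω : Type*} [Fintype Ω] (F : Ω → ℝ) : ℝ :=
  (Fintype.card Ω : ℝ)⁻¹ * ∑ ω, F ω

/-- The SARAH-IN state `(w_t, v_t)` given a starting point `w0`, a learning rate `η`,
a batch size `b` and a sequence of mini-batches `I` (where `I t` is the batch used to
form `v_t`, for `t ≥ 1`). -/
def sarahState {d n : ℕ} (f : Fin n → Vec d → ℝ) (w0 : Vec d) (η : ℝ) (b : ℕ)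
    (I : ℕ → Finset (Fin n)) : ℕ → Vec d × Vec d
  | 0 => (w0, (n : ℝ)⁻¹ • ∑ i, gradient (f i) w0)
  | t + 1 =>
    let p := sarahState f w0 η b I t
    let w' := p.1 - η • p.2
    (w', (b : ℝ)⁻¹ • ∑ i ∈ I (t + 1), (gradient (f i) w' - gradient (f i) p.1) + p.2)

/-- Extend a finite sequence of mini-batches to all of `ℕ` (indices `≥ T` are irrelevant). -/
def pad {n b T : ℕ} (ω : Fin T → Batch n b) : ℕ → Finset (Fin n) :=
  fun t => if h : t < T then (ω ⟨t, h⟩).1 else ∅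


open scoped RealInnerProductSpace
open Finset

lemma hasDerivAt_line {d : ℕ} {P : Vec d → ℝ} (hdP : Differentiable ℝ P)
    (x u : Vec d) (t : ℝ) :
    HasDerivAt (fun s : ℝ => P (x + s • u)) ⟪gradient P (x + t • u), u⟫ t := by
  have h1 : HasDerivAt (fun s : ℝ => x + s • u) u t := by
    simpa using ((hasDerivAt_id t).smul_const u).const_add x
  have h2 := ((hdP (x + t • u)).hasGradientAt).hasFDerivAt
  have := h2.comp_hasDerivAt t h1
  simpa [InnerProductSpace.toDual_apply_apply, Function.comp_def] using this

lemma descent_lemma {d : ℕ} {P : Vec d → ℝ} {L : ℝ} (hL : 0 ≤ L)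
    (hdP : Differentiable ℝ P)
    (hlip : ∀ w w', ‖gradient P w - gradient P w'‖ ≤ L * ‖w - w'‖)
    (x y : Vec d) :
    P y ≤ P x + ⟪gradient P x, y - x⟫ + L / 2 * ‖y - x‖ ^ 2 := by
  set u := y - x with hu
  set φ : ℝ → ℝ := fun t => P (x + t • u) - t * ⟪gradient P x, u⟫ - L / 2 * t ^ 2 * ‖u‖ ^ 2
    with hφ
  have hder : ∀ t : ℝ, HasDerivAt φ
      (⟪gradient P (x + t • u), u⟫ - ⟪gradient P x, u⟫ - L * t * ‖u‖ ^ 2) t := by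
    intro t
    have h1 := hasDerivAt_line hdP x u t
    have h2 : HasDerivAt (fun s : ℝ => s * ⟪gradient P x, u⟫) ⟪gradient P x, u⟫ t := by
      simpa using (hasDerivAt_id t).mul_const _
    have h3 : HasDerivAt (fun s : ℝ => L / 2 * s ^ 2 * ‖u‖ ^ 2) (L * t * ‖u‖ ^ 2) t := by
      have : HasDerivAt (fun s : ℝ => s ^ 2) (2 * t) t := by
        simpa using hasDerivAt_pow 2 t
      have := (this.const_mul (L / 2)).mul_const (‖u‖ ^ 2)
      rw [show L * t * ‖u‖ ^ 2 = L / 2 * (2 * t) * ‖u‖ ^ 2 by ring]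
      exact this
    exact (h1.sub h2).sub h3
  have hmono : AntitoneOn φ (Set.Icc (0:ℝ) 1) := by
    apply antitoneOn_of_deriv_nonpos (convex_Icc 0 1)
    · exact fun t _ => ((hder t).continuousAt).continuousWithinAt
    · intro t ht
      exact (hder t).differentiableAt.differentiableWithinAt
    · intro t ht
      rw [interior_Icc] at ht
      rw [(hder t).deriv]
      have hC : ⟪gradient P (x + t • u) - gradient P x, u⟫ ≤ L * t * ‖u‖ ^ 2 := by
        calc ⟪gradient P (x + t • u) - gradient P x, u⟫
            ≤ ‖gradient P (x + t • u) - gradient P x‖ * ‖u‖ := real_inner_le_norm _ _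
          _ ≤ (L * ‖(x + t • u) - x‖) * ‖u‖ := by
              have := hlip (x + t • u) x
              exact mul_le_mul_of_nonneg_right this (norm_nonneg u)
          _ = L * t * ‖u‖ ^ 2 := by
              rw [add_sub_cancel_left, norm_smul]
              simp [abs_of_pos ht.1]
              ring
      have := inner_sub_left (𝕜 := ℝ) (gradient P (x + t • u)) (gradient P x) u
      rw [this] at hC
      linarith
  have h01 := hmono (Set.left_mem_Icc.2 zero_le_one) (Set.right_mem_Icc.2 zero_le_one) zero_le_one
  simp only [hφ, zero_smul, add_zero, one_smul, zero_mul, zero_pow, mul_zero, sub_zero,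
    one_mul, one_pow, mul_one] at h01
  have : x + u = y := by rw [hu]; abel
  rw [this] at h01
  linarith

lemma count_mem {n b : ℕ} (i : Fin n) (hb : 1 ≤ b) :
    ((univ.powersetCard b).filter (fun s : Finset (Fin n) => i ∈ s)).card
      = (n - 1).choose (b - 1) := by
  have hrw : (n - 1).choose (b - 1) = (Finset.powersetCard (b-1) (univ.erase i)).card := by
    rw [Finset.card_powersetCard, Finset.card_erase_of_mem (mem_univ i), card_univ,
      Fintype.card_fin]
  rw [hrw]
  apply Finset.card_bij (fun s _ => s.erase i)
  · intro s hs
    simp only [mem_filter, Finset.mem_powersetCard] at hs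
    rw [Finset.mem_powersetCard]
    refine ⟨fun x hx => ?_, ?_⟩
    · simp only [Finset.mem_erase] at hx ⊢
      exact ⟨hx.1, mem_univ x⟩
    · rw [Finset.card_erase_of_mem hs.2, hs.1.2]
  · intro s hs t ht hst
    simp only [mem_filter] at hs ht
    rw [← Finset.insert_erase hs.2, ← Finset.insert_erase ht.2, hst]
  · intro t ht
    rw [Finset.mem_powersetCard] at ht
    refine ⟨insert i t, ?_, ?_⟩
    · simp only [mem_filter, Finset.mem_powersetCard, Finset.mem_insert_self, and_true]
      have hit : i ∉ t := fun h => by simpa using ht.1 h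
      refine ⟨fun x _ => mem_univ x, ?_⟩
      rw [Finset.card_insert_of_notMem hit, ht.2]
      omega
    · have hit : i ∉ t := fun h => by simpa using ht.1 h
      rw [Finset.erase_insert hit]

lemma count_pair {n b : ℕ} (i j : Fin n) (hij : i ≠ j) (hb : 2 ≤ b) :
    ((univ.powersetCard b).filter (fun s : Finset (Fin n) => i ∈ s ∧ j ∈ s)).card
      = (n - 2).choose (b - 2) := by
  have h2 : ((univ.erase i).erase j).card = n - 2 := by
    rw [Finset.card_erase_of_mem, Finset.card_erase_of_mem (mem_univ i)]
    · simp; omega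
    · simp [hij.symm]
  rw [← h2, ← Finset.card_powersetCard (b-2)]
  apply Finset.card_bij (fun s _ => (s.erase i).erase j)
  · intro s hs
    simp only [mem_filter, Finset.mem_powersetCard] at hs
    rw [Finset.mem_powersetCard]
    constructor
    · intro x hx
      simp only [Finset.mem_erase] at hx ⊢
      exact ⟨hx.1, hx.2.1, mem_univ x⟩
    · rw [Finset.card_erase_of_mem, Finset.card_erase_of_mem hs.2.1, hs.1.2]
      · omega
      · exact Finset.mem_erase.2 ⟨hij.symm, hs.2.2⟩
  · intro s hs t ht hst
    simp only [mem_filter] at hs ht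
    have : ∀ u : Finset (Fin n), i ∈ u → j ∈ u → insert i (insert j ((u.erase i).erase j)) = u := by
      intro u hi hj
      rw [Finset.insert_erase (Finset.mem_erase.2 ⟨hij.symm, hj⟩), Finset.insert_erase hi]
    rw [← this s hs.2.1 hs.2.2, ← this t ht.2.1 ht.2.2, hst]
  · intro t ht
    rw [Finset.mem_powersetCard] at ht
    have hi : i ∉ t := fun h => by simpa using (ht.1 h)
    have hj : j ∉ t := fun h => absurd rfl (Finset.mem_erase.1 (ht.1 h)).1
    refine ⟨insert i (insert j t), ?_, ?_⟩
    · simp only [mem_filter, Finset.mem_powersetCard]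
      refine ⟨⟨fun x _ => mem_univ x, ?_⟩, by simp, by simp [hij]⟩
      rw [Finset.card_insert_of_notMem (by simp [hi, hj, hij]),
        Finset.card_insert_of_notMem hj, ht.2]
      omega
    · rw [Finset.erase_insert (by simp [hi, hj, hij]), Finset.erase_insert hj]

def pairCount (n b : ℕ) : ℕ := if 2 ≤ b then (n - 2).choose (b - 2) else 0

lemma count_mem' {n b : ℕ} (hb : 1 ≤ b) (i : Fin n) :
    ((univ.powersetCard b).filter (fun s : Finset (Fin n) => i ∈ s)).card
      = (n - 1).choose (b - 1) := count_mem i hb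

lemma count_pair' {n b : ℕ} (i j : Fin n) (hij : i ≠ j) (hb : 1 ≤ b) :
    ((univ.powersetCard b).filter (fun s : Finset (Fin n) => i ∈ s ∧ j ∈ s)).card
      = pairCount n b := by
  rcases Nat.lt_or_ge b 2 with h | h
  · have hb1 : b = 1 := by omega
    rw [pairCount, if_neg (by omega)]
    rw [Finset.card_eq_zero, Finset.filter_eq_empty_iff]
    intro s hs
    rw [Finset.mem_powersetCard] at hs
    rintro ⟨hi, hj⟩
    have hsub : ({i, j} : Finset (Fin n)) ⊆ s := by
      intro x hx; simp at hx; rcases hx with rfl | rfl <;> assumption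
    have := Finset.card_le_card hsub
    rw [Finset.card_insert_of_notMem (by simp [hij]), Finset.card_singleton, hs.2, hb1] at this
    omega
  · rw [pairCount, if_pos h]
    exact count_pair i j hij h

lemma double_indicator {n : ℕ} (s : Finset (Fin n)) (c : Fin n → Fin n → ℝ) :
    ∑ i ∈ s, ∑ j ∈ s, c i j = ∑ i, ∑ j, if i ∈ s ∧ j ∈ s then c i j else 0 := by
  have h1 : ∀ g : Fin n → ℝ, ∑ i, (if i ∈ s then g i else 0) = ∑ i ∈ s, g i := by
    intro g; rw [Finset.sum_ite_mem, univ_inter]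
  rw [show (∑ i, ∑ j, if i ∈ s ∧ j ∈ s then c i j else 0)
      = ∑ i, (if i ∈ s then ∑ j, if j ∈ s then c i j else 0 else 0) from
    Finset.sum_congr rfl fun i _ => by by_cases hi : i ∈ s <;> simp [hi]]
  rw [h1]
  exact Finset.sum_congr rfl fun i _ => (h1 _).symm

lemma sum_sq_batch {d n b : ℕ} (hb : 1 ≤ b) (y : Fin n → Vec d) :
    ∑ s ∈ univ.powersetCard b, ‖∑ i ∈ s, y i‖ ^ 2
      = ((n - 1).choose (b - 1) : ℝ) * ∑ i, ‖y i‖ ^ 2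
        + (pairCount n b : ℝ) * (‖∑ i, y i‖ ^ 2 - ∑ i, ‖y i‖ ^ 2) := by
  set S := (univ : Finset (Fin n)).powersetCard b with hS
  set c : Fin n → Fin n → ℝ := fun i j => ⟪y i, y j⟫ with hc
  have expand : ∀ s : Finset (Fin n), ‖∑ i ∈ s, y i‖ ^ 2 = ∑ i ∈ s, ∑ j ∈ s, c i j := by
    intro s
    rw [← real_inner_self_eq_norm_sq, sum_inner]
    exact Finset.sum_congr rfl fun i _ => inner_sum _ _ _
  calc ∑ s ∈ S, ‖∑ i ∈ s, y i‖ ^ 2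
      = ∑ s ∈ S, ∑ i, ∑ j, if i ∈ s ∧ j ∈ s then c i j else 0 := by
        exact Finset.sum_congr rfl fun s _ => by rw [expand s, double_indicator]
    _ = ∑ i, ∑ j, ∑ s ∈ S, (if i ∈ s ∧ j ∈ s then c i j else 0) := by
        rw [Finset.sum_comm]
        exact Finset.sum_congr rfl fun i _ => Finset.sum_comm
    _ = ∑ i, ∑ j, ((S.filter (fun s => i ∈ s ∧ j ∈ s)).card : ℝ) * c i j := by
        refine Finset.sum_congr rfl fun i _ => Finset.sum_congr rfl fun j _ => ?_
        rw [← Finset.sum_filter, Finset.sum_const, nsmul_eq_mul]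
    _ = ∑ i, ∑ j, ((if i = j then ((n-1).choose (b-1) : ℝ) else (pairCount n b : ℝ)) * c i j) := by
        refine Finset.sum_congr rfl fun i _ => Finset.sum_congr rfl fun j _ => ?_
        congr 1
        by_cases hij : i = j
        · subst hij
          rw [if_pos rfl, ← count_mem' hb i]
          congr 2
          ext s
          simp only [Finset.mem_filter, and_self, hS]
        · rw [if_neg hij, count_pair' i j hij hb]
    _ = ∑ i, ∑ j, ((pairCount n b : ℝ) * c i j
          + if i = j then (((n-1).choose (b-1) : ℝ) - (pairCount n b : ℝ)) * c i j else 0) := by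
        refine Finset.sum_congr rfl fun i _ => Finset.sum_congr rfl fun j _ => ?_
        by_cases hij : i = j <;> simp [hij] <;> ring
    _ = ∑ i, ((pairCount n b : ℝ) * ∑ j, c i j
          + (((n-1).choose (b-1) : ℝ) - (pairCount n b : ℝ)) * c i i) := by
        refine Finset.sum_congr rfl fun i _ => ?_
        rw [Finset.sum_add_distrib, ← Finset.mul_sum, Finset.sum_ite_eq]
        simp
    _ = (pairCount n b : ℝ) * (∑ i, ∑ j, c i j)
          + (((n-1).choose (b-1) : ℝ) - (pairCount n b : ℝ)) * ∑ i, c i i := by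
        rw [Finset.sum_add_distrib, ← Finset.mul_sum, ← Finset.mul_sum]
    _ = _ := by
        have h1 : (∑ i, ∑ j, c i j) = ‖∑ i, y i‖ ^ 2 := by
          rw [← real_inner_self_eq_norm_sq, sum_inner]
          exact Finset.sum_congr rfl fun i _ => (inner_sum _ _ _).symm
        have h2 : ∀ i, c i i = ‖y i‖ ^ 2 := fun i => real_inner_self_eq_norm_sq _
        rw [h1]
        simp only [h2]
        ring

lemma count_arith {n b : ℕ} (hn : 2 ≤ n) (hb : 1 ≤ b) (hbn : b ≤ n) :
    (((n-1).choose (b-1) : ℝ) - (pairCount n b : ℝ)) * n * ((n:ℝ) - 1)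
      = (n.choose b : ℝ) * b * ((n:ℝ) - b) := by
  have I1 : n * (n-1).choose (b-1) = n.choose b * b := by
    have := Nat.add_one_mul_choose_eq (n-1) (b-1)
    have hn1 : n - 1 + 1 = n := by omega
    have hb1 : b - 1 + 1 = b := by omega
    rw [hn1, hb1] at this
    exact this
  rcases Nat.lt_or_ge b 2 with h2 | h2
  · have hb1 : b = 1 := by omega
    subst hb1
    simp only [pairCount, if_neg (by omega : ¬ 2 ≤ 1), Nat.cast_zero, Nat.sub_self,
      Nat.choose_zero_right, Nat.choose_one_right, Nat.cast_one, Nat.cast_ofNat]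
    push_cast
    ring
  · have I2 : (n-1) * (n-2).choose (b-2) = (n-1).choose (b-1) * (b-1) := by
      have := Nat.add_one_mul_choose_eq (n-2) (b-2)
      have hn2 : n - 2 + 1 = n - 1 := by omega
      have hb2 : b - 2 + 1 = b - 1 := by omega
      rw [hn2, hb2] at this
      exact this
    rw [pairCount, if_pos h2]
    have I1' : (n:ℝ) * ((n-1).choose (b-1) : ℝ) = (n.choose b : ℝ) * b := by exact_mod_cast I1
    have I2' : ((n:ℝ) - 1) * ((n-2).choose (b-2) : ℝ)
        = ((n-1).choose (b-1) : ℝ) * ((b:ℝ) - 1) := by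
      have := congrArg (Nat.cast (R := ℝ)) I2
      push_cast at this
      rw [Nat.cast_sub (by omega : 1 ≤ n), Nat.cast_sub (by omega : 1 ≤ b)] at this
      push_cast at this
      convert this using 2 <;> push_cast <;> ring
    nlinarith [I1', I2']

lemma sum_centered_le {d n : ℕ} (hn : 1 ≤ n) (z : Fin n → Vec d) :
    ∑ i, ‖z i - (n:ℝ)⁻¹ • ∑ j, z j‖ ^ 2 ≤ ∑ i, ‖z i‖ ^ 2 := by
  set zb := (n:ℝ)⁻¹ • ∑ j, z j with hzb
  have hsum : ∑ j, z j = (n:ℝ) • zb := by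
    rw [hzb, smul_smul, mul_inv_cancel₀ (by positivity : (n:ℝ) ≠ 0), one_smul]
  have expand : ∀ i, ‖z i - zb‖ ^ 2 = ‖z i‖ ^ 2 - 2 * ⟪z i, zb⟫ + ‖zb‖ ^ 2 := by
    intro i
    rw [norm_sub_sq_real]
  calc ∑ i, ‖z i - zb‖ ^ 2 = ∑ i, ‖z i‖ ^ 2 - 2 * ⟪∑ i, z i, zb⟫ + n * ‖zb‖ ^ 2 := by
        simp only [expand]
        rw [Finset.sum_add_distrib, Finset.sum_sub_distrib, ← Finset.mul_sum, sum_inner,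
          Finset.sum_const, card_univ, Fintype.card_fin, nsmul_eq_mul]
    _ = ∑ i, ‖z i‖ ^ 2 - n * ‖zb‖ ^ 2 := by
        rw [hsum, real_inner_smul_left, real_inner_self_eq_norm_sq]
        ring
    _ ≤ ∑ i, ‖z i‖ ^ 2 := by
        have : (0:ℝ) ≤ n * ‖zb‖ ^ 2 := by positivity
        linarith

lemma batch_first_moment {d n b : ℕ} (hb : 1 ≤ b) (hbn : b ≤ n) (hn : 1 ≤ n)
    (z : Fin n → Vec d) :
    ∑ s ∈ univ.powersetCard b, ((b:ℝ)⁻¹ • ∑ i ∈ s, z i - (n:ℝ)⁻¹ • ∑ i, z i) = 0 := by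
  have hswap : ∑ s ∈ univ.powersetCard b, ∑ i ∈ s, z i
      = ((n-1).choose (b-1) : ℝ) • ∑ i, z i := by
    have h1 : ∀ s : Finset (Fin n), ∑ i ∈ s, z i = ∑ i, if i ∈ s then z i else 0 := by
      intro s
      rw [Finset.sum_ite_mem, univ_inter]
    calc ∑ s ∈ univ.powersetCard b, ∑ i ∈ s, z i
        = ∑ s ∈ univ.powersetCard b, ∑ i, (if i ∈ s then z i else 0) :=
          Finset.sum_congr rfl fun s _ => h1 s
      _ = ∑ i, ∑ s ∈ univ.powersetCard b, (if i ∈ s then z i else 0) := Finset.sum_comm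
      _ = ∑ i, ((n-1).choose (b-1) : ℝ) • z i := by
          refine Finset.sum_congr rfl fun i _ => ?_
          rw [← Finset.sum_filter, Finset.sum_const, count_mem' hb i,
            Nat.cast_smul_eq_nsmul ℝ]
      _ = _ := by rw [← Finset.smul_sum]
  rw [Finset.sum_sub_distrib, ← Finset.smul_sum, hswap, Finset.sum_const,
    Finset.card_powersetCard, card_univ, Fintype.card_fin, smul_smul, sub_eq_zero]
  have key : (b:ℝ)⁻¹ * ((n-1).choose (b-1) : ℝ) = (n.choose b : ℝ) * (n:ℝ)⁻¹ := by
    have I1 : n * (n-1).choose (b-1) = n.choose b * b := by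
      have := Nat.add_one_mul_choose_eq (n-1) (b-1)
      rw [(by omega : n - 1 + 1 = n), (by omega : b - 1 + 1 = b)] at this
      exact this
    have I1' : (n:ℝ) * ((n-1).choose (b-1) : ℝ) = (n.choose b : ℝ) * b := by exact_mod_cast I1
    field_simp
    linarith [I1']
  rw [key, mul_smul, ← Nat.cast_smul_eq_nsmul ℝ]

lemma batch_var_bound {d n b : ℕ} (hn : 2 ≤ n) (hb : 1 ≤ b) (hbn : b ≤ n)
    (z : Fin n → Vec d) {C : ℝ} (hC : 0 ≤ C) (hz : ∀ i, ‖z i‖ ≤ C) :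
    ∑ s ∈ univ.powersetCard b, ‖(b:ℝ)⁻¹ • ∑ i ∈ s, z i - (n:ℝ)⁻¹ • ∑ i, z i‖ ^ 2
      ≤ (n.choose b : ℝ) * (((n:ℝ) - b) / (b * ((n:ℝ) - 1))) * C ^ 2 := by
  set zb := (n:ℝ)⁻¹ • ∑ j, z j with hzb
  set y : Fin n → Vec d := fun i => z i - zb with hy
  have hbne : (b:ℝ) ≠ 0 := by positivity
  have hrw : ∀ s ∈ univ.powersetCard b,
      ‖(b:ℝ)⁻¹ • ∑ i ∈ s, z i - zb‖ ^ 2 = ((b:ℝ)⁻¹) ^ 2 * ‖∑ i ∈ s, y i‖ ^ 2 := by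
    intro s hs
    have hcard : s.card = b := (Finset.mem_powersetCard_univ.1 hs)
    have h1 : ∑ i ∈ s, y i = ∑ i ∈ s, z i - (b:ℝ) • zb := by
      rw [hy]
      rw [Finset.sum_sub_distrib, Finset.sum_const, hcard, ← Nat.cast_smul_eq_nsmul ℝ]
    have h2 : (b:ℝ)⁻¹ • ∑ i ∈ s, y i = (b:ℝ)⁻¹ • ∑ i ∈ s, z i - zb := by
      rw [h1, smul_sub, smul_smul, inv_mul_cancel₀ hbne, one_smul]
    rw [← h2, norm_smul]
    simp [mul_pow]
  have hy0 : ∑ i, y i = 0 := by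
    rw [hy]
    simp only
    rw [Finset.sum_sub_distrib, Finset.sum_const, card_univ, Fintype.card_fin, hzb,
      ← Nat.cast_smul_eq_nsmul ℝ, smul_smul, mul_inv_cancel₀ (by positivity : (n:ℝ) ≠ 0),
      one_smul, sub_self]
  calc ∑ s ∈ univ.powersetCard b, ‖(b:ℝ)⁻¹ • ∑ i ∈ s, z i - zb‖ ^ 2
      = ((b:ℝ)⁻¹) ^ 2 * ∑ s ∈ univ.powersetCard b, ‖∑ i ∈ s, y i‖ ^ 2 := by
        rw [Finset.mul_sum]
        exact Finset.sum_congr rfl fun s hs => by rw [hrw s hs]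
    _ = ((b:ℝ)⁻¹) ^ 2 * ((((n-1).choose (b-1) : ℝ) - (pairCount n b : ℝ)) * ∑ i, ‖y i‖ ^ 2) := by
        rw [sum_sq_batch hb y, hy0, norm_zero]
        ring
    _ ≤ ((b:ℝ)⁻¹) ^ 2 * ((((n-1).choose (b-1) : ℝ) - (pairCount n b : ℝ)) * ((n:ℝ) * C ^ 2)) := by
        have harith := count_arith (n := n) (b := b) hn hb hbn
        have hpos : (0:ℝ) < (n:ℝ) * ((n:ℝ) - 1) := by
          have : (2:ℝ) ≤ (n:ℝ) := by exact_mod_cast hn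
          nlinarith
        have hcoef : (0:ℝ) ≤ (((n-1).choose (b-1) : ℝ) - (pairCount n b : ℝ)) := by
          have hrhs : (0:ℝ) ≤ (n.choose b : ℝ) * b * ((n:ℝ) - b) := by
            have hnb : (0:ℝ) ≤ (n:ℝ) - (b:ℝ) := by
              have : (b:ℝ) ≤ (n:ℝ) := by exact_mod_cast hbn
              linarith
            exact mul_nonneg (by positivity) hnb
          nlinarith
        have hyb : ∑ i, ‖y i‖ ^ 2 ≤ (n:ℝ) * C ^ 2 := by
          calc ∑ i, ‖y i‖ ^ 2 ≤ ∑ i, ‖z i‖ ^ 2 := sum_centered_le (by omega) z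
            _ ≤ ∑ _i : Fin n, C ^ 2 := Finset.sum_le_sum fun i _ =>
                pow_le_pow_left₀ (norm_nonneg _) (hz i) 2
            _ = (n:ℝ) * C ^ 2 := by simp [Finset.sum_const, mul_comm]
        have h2 : (0:ℝ) ≤ ((b:ℝ)⁻¹) ^ 2 := by positivity
        exact mul_le_mul_of_nonneg_left (mul_le_mul_of_nonneg_left hyb hcoef) h2
    _ = (((n-1).choose (b-1) : ℝ) - (pairCount n b : ℝ)) * (n:ℝ) / ((b:ℝ))^2 * C ^ 2 := by
        field_simp
    _ ≤ (n.choose b : ℝ) * (((n:ℝ) - b) / (b * ((n:ℝ) - 1))) * C ^ 2 := by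
        have harith := count_arith (n := n) (b := b) hn hb hbn
        have hb1 : (1:ℝ) ≤ (b:ℝ) := by exact_mod_cast hb
        have hn1 : (0:ℝ) < (n:ℝ) - 1 := by
          have : (2:ℝ) ≤ (n:ℝ) := by exact_mod_cast hn
          linarith
        have heq : (((n-1).choose (b-1) : ℝ) - (pairCount n b : ℝ)) * (n:ℝ) / ((b:ℝ))^2
            = (n.choose b : ℝ) * (((n:ℝ) - b) / (b * ((n:ℝ) - 1))) := by
          field_simp
          linear_combination harith
        rw [heq]

lemma sarahState_congr {d n : ℕ} (f : Fin n → Vec d → ℝ) (w0 : Vec d) (η : ℝ) (b : ℕ)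
    {I I' : ℕ → Finset (Fin n)} (t : ℕ) (h : ∀ j, 1 ≤ j → j ≤ t → I j = I' j) :
    sarahState f w0 η b I t = sarahState f w0 η b I' t := by
  induction t with
  | zero => rfl
  | succ t ih =>
    have h1 := ih (fun j hj1 hj2 => h j hj1 (by omega))
    simp only [sarahState]
    rw [h1, h (t+1) (by omega) le_rfl]

lemma gradP_eq {d n : ℕ} (f : Fin n → Vec d → ℝ) (hdiff : ∀ i, Differentiable ℝ (f i))
    {P : Vec d → ℝ} (hP : P = fun w => (n : ℝ)⁻¹ * ∑ i, f i w) (x : Vec d) :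
    gradient P x = (n : ℝ)⁻¹ • ∑ i, gradient (f i) x := by
  subst hP
  unfold gradient
  rw [fderiv_const_mul (by fun_prop), fderiv_fun_sum (fun i _ => hdiff i x)]
  simp [map_smul, map_sum]

lemma diffP {d n : ℕ} (f : Fin n → Vec d → ℝ) (hdiff : ∀ i, Differentiable ℝ (f i))
    {P : Vec d → ℝ} (hP : P = fun w => (n : ℝ)⁻¹ * ∑ i, f i w) : Differentiable ℝ P := by
  subst hP; fun_prop

lemma lipP {d n : ℕ} (hn : 1 ≤ n) (f : Fin n → Vec d → ℝ) {L : ℝ} (hL : 0 < L)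
    (hdiff : ∀ i, Differentiable ℝ (f i))
    (hsmooth : ∀ i (w w' : Vec d), ‖gradient (f i) w - gradient (f i) w'‖ ≤ L * ‖w - w'‖)
    {P : Vec d → ℝ} (hP : P = fun w => (n : ℝ)⁻¹ * ∑ i, f i w) (x y : Vec d) :
    ‖gradient P x - gradient P y‖ ≤ L * ‖x - y‖ := by
  rw [gradP_eq f hdiff hP, gradP_eq f hdiff hP, ← smul_sub, ← Finset.sum_sub_distrib,
    norm_smul]
  have h1 : ‖∑ i, (gradient (f i) x - gradient (f i) y)‖ ≤ (n:ℝ) * (L * ‖x - y‖) := by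
    calc ‖∑ i, (gradient (f i) x - gradient (f i) y)‖
        ≤ ∑ i, ‖gradient (f i) x - gradient (f i) y‖ := norm_sum_le _ _
      _ ≤ ∑ _i : Fin n, L * ‖x - y‖ := Finset.sum_le_sum fun i _ => hsmooth i x y
      _ = (n:ℝ) * (L * ‖x - y‖) := by simp [mul_comm]
  have hn0 : (0:ℝ) < (n:ℝ) := by exact_mod_cast Nat.lt_of_lt_of_le Nat.zero_lt_one hn
  calc ‖((n:ℝ)⁻¹ : ℝ)‖ * ‖∑ i, (gradient (f i) x - gradient (f i) y)‖
      ≤ (n:ℝ)⁻¹ * ((n:ℝ) * (L * ‖x - y‖)) := by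
        rw [Real.norm_eq_abs, abs_of_pos (by positivity)]
        exact mul_le_mul_of_nonneg_left h1 (by positivity)
    _ = L * ‖x - y‖ := by field_simp

lemma sum_batch_subtype {n b : ℕ} {M : Type*} [AddCommMonoid M] (F : Finset (Fin n) → M) :
    ∑ s : Batch n b, F s.1 = ∑ s ∈ univ.powersetCard b, F s := by
  rw [Finset.sum_subtype (univ.powersetCard b)
    (fun s => Finset.mem_powersetCard_univ) F]
  rfl

lemma var_step {d n : ℕ} (hn : 2 ≤ n) (f : Fin n → Vec d → ℝ) {L : ℝ} (hL : 0 < L)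
    (hdiff : ∀ i, Differentiable ℝ (f i))
    (hsmooth : ∀ i (w w' : Vec d), ‖gradient (f i) w - gradient (f i) w'‖ ≤ L * ‖w - w'‖)
    {P : Vec d → ℝ} (hP : P = fun w => (n : ℝ)⁻¹ * ∑ i, f i w)
    (w0 : Vec d) {η : ℝ} (hη : 0 < η) {b : ℕ} (m : ℕ) (hb : 1 ≤ b) (hbn : b ≤ n)
    (t : ℕ) (ht : t + 1 ≤ m) :
    ∑ ω : Fin (m+1) → Batch n b,
        ‖gradient P ((sarahState f w0 η b (pad ω) (t+1)).1)
          - (sarahState f w0 η b (pad ω) (t+1)).2‖ ^ 2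
      ≤ (∑ ω : Fin (m+1) → Batch n b,
          ‖gradient P ((sarahState f w0 η b (pad ω) t).1)
            - (sarahState f w0 η b (pad ω) t).2‖ ^ 2)
        + (((n:ℝ) - b) / (b * ((n:ℝ) - 1))) * (L * η) ^ 2
          * ∑ ω : Fin (m+1) → Batch n b, ‖(sarahState f w0 η b (pad ω) t).2‖ ^ 2 := by
  classical
  set B := Batch n b
  obtain ⟨s0s, _, hs0⟩ := Finset.exists_subset_card_eq (s := (univ : Finset (Fin n))) (n := b)
    (by simpa using hbn)
  set s0 : B := ⟨s0s, hs0⟩ with hs0def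
  set i : Fin (m+1) := ⟨t+1, by omega⟩ with hidef
  set e := Equiv.funSplitAt i B with hedef
  have hsymm_at : ∀ q : B × ({j : Fin (m+1) // j ≠ i} → B), (e.symm q) i = q.1 :=
    fun q => congrArg Prod.fst (e.apply_symm_apply q)
  have hsymm_ne : ∀ (q : B × ({j : Fin (m+1) // j ≠ i} → B)) (j : Fin (m+1)) (hj : j ≠ i),
      (e.symm q) j = q.2 ⟨j, hj⟩ :=
    fun q j hj => congrFun (congrArg Prod.snd (e.apply_symm_apply q)) ⟨j, hj⟩
  -- state at time t depends only on the r-part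
  have hstate : ∀ (s : B) (r : {j : Fin (m+1) // j ≠ i} → B),
      sarahState f w0 η b (pad (e.symm (s, r))) t
        = sarahState f w0 η b (pad (e.symm (s0, r))) t := by
    intro s r
    apply sarahState_congr
    intro j hj1 hj2
    have hjm : j < m + 1 := by omega
    have hne : (⟨j, hjm⟩ : Fin (m+1)) ≠ i := by
      intro h
      have := congrArg Fin.val h
      simp [hidef] at this
      omega
    show (if h : j < m+1 then ((e.symm (s, r)) ⟨j, h⟩).1 else ∅)
      = (if h : j < m+1 then ((e.symm (s0, r)) ⟨j, h⟩).1 else ∅)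
    rw [dif_pos hjm, dif_pos hjm, hsymm_ne _ _ hne, hsymm_ne _ _ hne]
  have hpad : ∀ q : B × ({j : Fin (m+1) // j ≠ i} → B),
      pad (e.symm q) (t+1) = q.1.1 := by
    intro q
    show (if h : t+1 < m+1 then ((e.symm q) ⟨t+1, h⟩).1 else ∅) = q.1.1
    rw [dif_pos (by omega)]
    congr 1
    exact hsymm_at q
  set W : ({j : Fin (m+1) // j ≠ i} → B) → Vec d := fun r => (sarahState f w0 η b (pad (e.symm (s0, r))) t).1 with hW
  set V : ({j : Fin (m+1) // j ≠ i} → B) → Vec d := fun r => (sarahState f w0 η b (pad (e.symm (s0, r))) t).2 with hV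
  set z : ({j : Fin (m+1) // j ≠ i} → B) → Fin n → Vec d := fun r k =>
    gradient (f k) (W r - η • V r) - gradient (f k) (W r) with hz
  set D : ({j : Fin (m+1) // j ≠ i} → B) → Vec d := fun r => gradient P (W r) - V r with hD
  set X : ({j : Fin (m+1) // j ≠ i} → B) → Finset (Fin n) → Vec d := fun r s =>
    (b:ℝ)⁻¹ • ∑ k ∈ s, z r k - (n:ℝ)⁻¹ • ∑ k, z r k with hX
  set N : ℕ := Fintype.card B with hN
  -- key pointwise identity
  have hkey : ∀ (s : B) (r : {j : Fin (m+1) // j ≠ i} → B),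
      gradient P ((sarahState f w0 η b (pad (e.symm (s, r))) (t+1)).1)
        - (sarahState f w0 η b (pad (e.symm (s, r))) (t+1)).2
      = D r - X r s.1 := by
    intro s r
    have h1 : sarahState f w0 η b (pad (e.symm (s, r))) (t+1)
        = (W r - η • V r,
           (b:ℝ)⁻¹ • ∑ k ∈ s.1, (gradient (f k) (W r - η • V r) - gradient (f k) (W r))
             + V r) := by
      show (let p := sarahState f w0 η b (pad (e.symm (s, r))) t
            let w' := p.1 - η • p.2
            (w', (b:ℝ)⁻¹ • ∑ k ∈ pad (e.symm (s, r)) (t+1),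
              (gradient (f k) w' - gradient (f k) p.1) + p.2)) = _
      rw [hstate s r, hpad (s, r)]
    rw [h1]
    have hgrad : gradient P (W r - η • V r)
        = gradient P (W r) + (n:ℝ)⁻¹ • ∑ k, z r k := by
      rw [gradP_eq f hdiff hP, gradP_eq f hdiff hP, hz]
      simp only
      rw [← smul_add, ← Finset.sum_add_distrib]
      congr 1
      apply Finset.sum_congr rfl
      intro k _
      abel
    simp only
    rw [hgrad, hX, hD, hz]
    simp only
    abel
  -- rewrite all three sums through the equivalence
  have hsum : ∀ F : (Fin (m+1) → B) → ℝ,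
      ∑ ω, F ω = ∑ r : {j : Fin (m+1) // j ≠ i} → B, ∑ s : B, F (e.symm (s, r)) := by
    intro F
    rw [← Equiv.sum_comp e.symm F, Fintype.sum_prod_type]
    exact Finset.sum_comm
  rw [hsum, hsum (fun ω => ‖gradient P ((sarahState f w0 η b (pad ω) t).1)
      - (sarahState f w0 η b (pad ω) t).2‖ ^ 2),
    hsum (fun ω => ‖(sarahState f w0 η b (pad ω) t).2‖ ^ 2)]
  have hsimp2 : ∀ r : {j : Fin (m+1) // j ≠ i} → B, ∑ s : B, ‖gradient P ((sarahState f w0 η b (pad (e.symm (s, r))) t).1)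
      - (sarahState f w0 η b (pad (e.symm (s, r))) t).2‖ ^ 2 = (N:ℝ) * ‖D r‖ ^ 2 := by
    intro r
    rw [Finset.sum_congr rfl (fun s _ => by rw [hstate s r])]
    rw [Finset.sum_const, card_univ, nsmul_eq_mul]
  have hsimp3 : ∀ r : {j : Fin (m+1) // j ≠ i} → B, ∑ s : B, ‖(sarahState f w0 η b (pad (e.symm (s, r))) t).2‖ ^ 2
      = (N:ℝ) * ‖V r‖ ^ 2 := by
    intro r
    rw [Finset.sum_congr rfl (fun s _ => by rw [hstate s r])]
    rw [Finset.sum_const, card_univ, nsmul_eq_mul]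
  simp only [hsimp2, hsimp3]
  rw [Finset.mul_sum, ← Finset.sum_add_distrib]
  apply Finset.sum_le_sum
  intro r _
  -- now a per-r inequality over s
  have hXsum : ∑ s : B, X r s.1 = 0 := by
    rw [sum_batch_subtype (fun s => X r s)]
    exact batch_first_moment hb hbn (by omega) (z r)
  have hC0 : (0:ℝ) ≤ L * η * ‖V r‖ := by positivity
  have hzbound : ∀ k, ‖z r k‖ ≤ L * η * ‖V r‖ := by
    intro k
    calc ‖z r k‖ ≤ L * ‖(W r - η • V r) - W r‖ := hsmooth k _ _
      _ = L * η * ‖V r‖ := by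
          rw [sub_sub_cancel_left, norm_neg, norm_smul, Real.norm_eq_abs,
            abs_of_pos hη]
          ring
  have hXsq : ∑ s : B, ‖X r s.1‖ ^ 2
      ≤ (N:ℝ) * ((((n:ℝ) - b) / (b * ((n:ℝ) - 1))) * (L * η) ^ 2 * ‖V r‖ ^ 2) := by
    rw [sum_batch_subtype (fun s => ‖X r s‖ ^ 2)]
    calc ∑ s ∈ univ.powersetCard b, ‖X r s‖ ^ 2
        ≤ (n.choose b : ℝ) * (((n:ℝ) - b) / (b * ((n:ℝ) - 1))) * (L * η * ‖V r‖) ^ 2 :=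
          batch_var_bound hn hb hbn (z r) hC0 hzbound
      _ = (n.choose b : ℝ) * ((((n:ℝ) - b) / (b * ((n:ℝ) - 1))) * (L * η) ^ 2 * ‖V r‖ ^ 2) := by
          ring
      _ = (N:ℝ) * ((((n:ℝ) - b) / (b * ((n:ℝ) - 1))) * (L * η) ^ 2 * ‖V r‖ ^ 2) := by
          have hcard : N = n.choose b := by
            rw [hN, show Fintype.card B = Fintype.card {s : Finset (Fin n) // s.card = b}
              from rfl, Fintype.card_finset_len, Fintype.card_fin]
          rw [hcard]
  calc ∑ s : B, ‖gradient P ((sarahState f w0 η b (pad (e.symm (s, r))) (t+1)).1)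
        - (sarahState f w0 η b (pad (e.symm (s, r))) (t+1)).2‖ ^ 2
      = ∑ s : B, ‖D r - X r s.1‖ ^ 2 :=
        Finset.sum_congr rfl fun s _ => by rw [hkey s r]
    _ = ∑ s : B, (‖D r‖ ^ 2 - 2 * ⟪D r, X r s.1⟫ + ‖X r s.1‖ ^ 2) :=
        Finset.sum_congr rfl fun s _ => by rw [norm_sub_sq_real]
    _ = (N:ℝ) * ‖D r‖ ^ 2 - 2 * ⟪D r, ∑ s : B, X r s.1⟫ + ∑ s : B, ‖X r s.1‖ ^ 2 := by
        rw [Finset.sum_add_distrib, Finset.sum_sub_distrib, Finset.sum_const, card_univ,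
          nsmul_eq_mul, ← Finset.mul_sum, inner_sum]
    _ ≤ (N:ℝ) * ‖D r‖ ^ 2 + (N:ℝ) * ((((n:ℝ) - b) / (b * ((n:ℝ) - 1))) * (L * η) ^ 2
          * ‖V r‖ ^ 2) := by
        rw [hXsum, inner_zero_right]
        simpa using hXsq
    _ = (N:ℝ) * ‖D r‖ ^ 2 + (((n:ℝ) - b) / (b * ((n:ℝ) - 1))) * (L * η) ^ 2
          * ((N:ℝ) * ‖V r‖ ^ 2) := by ring

lemma descent_step {d : ℕ} {P : Vec d → ℝ} {L η : ℝ} (hL : 0 < L) (hη : 0 < η)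
    (hdP : Differentiable ℝ P)
    (hlip : ∀ w w', ‖gradient P w - gradient P w'‖ ≤ L * ‖w - w'‖)
    (w v : Vec d) :
    P (w - η • v) ≤ P w - η/2 * ‖gradient P w‖ ^ 2 + η/2 * ‖gradient P w - v‖ ^ 2
      - η/2 * (1 - L * η) * ‖v‖ ^ 2 := by
  have h := descent_lemma hL.le hdP hlip w (w - η • v)
  rw [sub_sub_cancel_left, inner_neg_right, real_inner_smul_right, norm_neg, norm_smul,
    Real.norm_eq_abs, abs_of_pos hη] at h
  have hip : ‖gradient P w - v‖ ^ 2
      = ‖gradient P w‖ ^ 2 - 2 * ⟪gradient P w, v⟫ + ‖v‖ ^ 2 := norm_sub_sq_real _ _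
  have heq : P w - η/2 * ‖gradient P w‖ ^ 2 + η/2 * ‖gradient P w - v‖ ^ 2
      - η/2 * (1 - L * η) * ‖v‖ ^ 2
      = P w + -(η * ⟪gradient P w, v⟫) + L / 2 * (η * ‖v‖) ^ 2 := by
    linear_combination (η/2) * hip
  rw [heq]
  exact h

lemma eta_cond {L η : ℝ} (hL : 0 < L) (hη : 0 < η) {ρ0 : ℝ} (hρ0 : 0 ≤ ρ0) (m : ℕ)
    (hη2 : η ≤ 2 / (L * (Real.sqrt (1 + 4 * (m:ℝ) * ρ0) + 1))) :
    (m:ℝ) * ρ0 * (L * η) ^ 2 ≤ 1 - L * η := by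
  set s := Real.sqrt (1 + 4 * (m:ℝ) * ρ0) with hs
  have hs2 : s ^ 2 = 1 + 4 * (m:ℝ) * ρ0 := Real.sq_sqrt (by positivity)
  have hs0 : 0 ≤ s := Real.sqrt_nonneg _
  have hs1 : 1 ≤ s := by nlinarith [Nat.cast_nonneg (α := ℝ) m]
  have hden : 0 < L * (s + 1) := by positivity
  have h1 : η * (L * (s + 1)) ≤ 2 := by
    rw [← le_div_iff₀ hden]
    exact hη2
  have h2 : (s - 1) * (L * η) * ((s + 1) * (L * η)) ≤ (s - 1) * (L * η) * 2 := by
    apply mul_le_mul_of_nonneg_left _ (mul_nonneg (by linarith) (by positivity))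
    linarith [h1]
  nlinarith [h2, h1, Nat.cast_nonneg (α := ℝ) m]
set_option maxHeartbeats 1600000 in
/-- One inner loop of SARAH on a `τ`-gradient dominated `P` with small enough learning
rate and uniformly chosen output satisfies `E‖∇P(w̃)‖² ≤ (2τ/(η(m+1)))‖∇P(w₀)‖²`. -/
theorem sarah_in_gradient_dominated_contraction
    {d n : ℕ} (hn : 2 ≤ n)
    (f : Fin n → Vec d → ℝ) (L : ℝ) (hL : 0 < L)
    (hdiff : ∀ i, Differentiable ℝ (f i))
    (hsmooth : ∀ i (w w' : Vec d),
      ‖gradient (f i) w - gradient (f i) w'‖ ≤ L * ‖w - w'‖)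
    (P : Vec d → ℝ) (hP : P = fun w => (n : ℝ)⁻¹ * ∑ i, f i w)
    (wstar : Vec d) (hmin : ∀ w, P wstar ≤ P w)
    (τ : ℝ) (hτ : 0 < τ) (hdom : ∀ w, P w - P wstar ≤ τ * ‖gradient P w‖ ^ 2)
    (w0 : Vec d) (η : ℝ) (hη : 0 < η) (b m : ℕ) (hb : 1 ≤ b) (hbn : b ≤ n)
    (hη2 : η ≤ 2 / (L * (Real.sqrt (1 + 4 * (m : ℝ) / (b : ℝ)
      * (((n : ℝ) - (b : ℝ)) / ((n : ℝ) - 1))) + 1))) :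
    expec (fun p : (Fin (m + 1) → Batch n b) × Fin (m + 1) =>
        ‖gradient P ((sarahState f w0 η b (pad p.1) (p.2 : ℕ)).1)‖ ^ 2)
      ≤ 2 * τ / (η * ((m : ℝ) + 1)) * ‖gradient P w0‖ ^ 2 := by
  classical
  have hn1 : (1:ℕ) ≤ n := by omega
  have hd1 : Differentiable ℝ P := diffP f hdiff hP
  have hlip : ∀ x y : Vec d, ‖gradient P x - gradient P y‖ ≤ L * ‖x - y‖ :=
    lipP hn1 f hL hdiff hsmooth hP
  have hnR : (2:ℝ) ≤ (n:ℝ) := by exact_mod_cast hn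
  have hbR : (1:ℝ) ≤ (b:ℝ) := by exact_mod_cast hb
  have hbnR : (b:ℝ) ≤ (n:ℝ) := by exact_mod_cast hbn
  set ρ0 : ℝ := ((n:ℝ) - b) / (b * ((n:ℝ) - 1)) with hρ0def
  have hρ0 : 0 ≤ ρ0 := div_nonneg (by linarith) (by nlinarith)
  set c : ℝ := ρ0 * (L * η) ^ 2 with hcdef
  have hc0 : 0 ≤ c := by positivity
  set A : ℕ → ℝ := fun t => ∑ ω : Fin (m+1) → Batch n b,
    ‖gradient P ((sarahState f w0 η b (pad ω) t).1)
      - (sarahState f w0 η b (pad ω) t).2‖ ^ 2 with hA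
  set u : ℕ → ℝ := fun t => ∑ ω : Fin (m+1) → Batch n b,
    ‖(sarahState f w0 η b (pad ω) t).2‖ ^ 2 with hu
  set gq : ℕ → ℝ := fun t => ∑ ω : Fin (m+1) → Batch n b,
    ‖gradient P ((sarahState f w0 η b (pad ω) t).1)‖ ^ 2 with hgq
  set Φ : ℕ → ℝ := fun t => ∑ ω : Fin (m+1) → Batch n b,
    P ((sarahState f w0 η b (pad ω) t).1) with hΦ
  have hu_nn : ∀ t, 0 ≤ u t := fun t => Finset.sum_nonneg fun ω _ => by positivity
  have hA0 : A 0 = 0 := by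
    rw [hA]
    apply Finset.sum_eq_zero
    intro ω _
    have h1 : (sarahState f w0 η b (pad ω) 0)
        = (w0, (n:ℝ)⁻¹ • ∑ i, gradient (f i) w0) := rfl
    rw [h1, gradP_eq f hdiff hP]
    simp
  have hAstep : ∀ t, t + 1 ≤ m → A (t+1) ≤ A t + c * u t := by
    intro t ht
    have h := var_step hn f hL hdiff hsmooth hP w0 hη m hb hbn t ht
    calc A (t+1) ≤ A t + ρ0 * (L*η)^2 * u t := h
      _ = A t + c * u t := by rw [hcdef]
  have hAle : ∀ t, t ≤ m → A t ≤ c * ∑ j ∈ Finset.range t, u j := by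
    intro t
    induction t with
    | zero => intro _; simp [hA0]
    | succ t ih =>
      intro ht
      have h1 := ih (by omega)
      have h2 := hAstep t ht
      calc A (t+1) ≤ A t + c * u t := h2
        _ ≤ c * ∑ j ∈ Finset.range t, u j + c * u t := by linarith
        _ = c * ∑ j ∈ Finset.range (t+1), u j := by
            rw [Finset.sum_range_succ]; ring
  set Su : ℝ := ∑ t ∈ Finset.range (m+1), u t with hSu
  set Sg : ℝ := ∑ t ∈ Finset.range (m+1), gq t with hSg
  have hSu_nn : 0 ≤ Su := Finset.sum_nonneg fun t _ => hu_nn t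
  have hAsum : ∑ t ∈ Finset.range (m+1), A t ≤ c * m * Su := by
    rw [Finset.sum_range_succ']
    have hUb : ∀ i, i < m → A (i+1) ≤ c * Su := by
      intro i hi
      calc A (i+1) ≤ c * ∑ j ∈ Finset.range (i+1), u j := hAle (i+1) (by omega)
        _ ≤ c * Su := by
            apply mul_le_mul_of_nonneg_left _ hc0
            rw [hSu]
            exact Finset.sum_le_sum_of_subset_of_nonneg
              (Finset.range_subset_range.2 (by omega)) (fun j _ _ => hu_nn j)
    calc (∑ i ∈ Finset.range m, A (i+1)) + A 0
        ≤ (∑ i ∈ Finset.range m, c * Su) + 0 := by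
          apply add_le_add _ (le_of_eq hA0)
          exact Finset.sum_le_sum fun i hi => hUb i (Finset.mem_range.1 hi)
      _ = c * m * Su := by
          rw [Finset.sum_const, Finset.card_range, nsmul_eq_mul]
          ring
  have hdesc : ∀ t, Φ (t+1) ≤ Φ t - η/2 * gq t + η/2 * A t - η/2 * (1 - L*η) * u t := by
    intro t
    have hstep : ∀ ω : Fin (m+1) → Batch n b,
        P ((sarahState f w0 η b (pad ω) (t+1)).1)
          ≤ P ((sarahState f w0 η b (pad ω) t).1)
            - η/2 * ‖gradient P ((sarahState f w0 η b (pad ω) t).1)‖ ^ 2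
            + η/2 * ‖gradient P ((sarahState f w0 η b (pad ω) t).1)
                - (sarahState f w0 η b (pad ω) t).2‖ ^ 2
            - η/2 * (1 - L*η) * ‖(sarahState f w0 η b (pad ω) t).2‖ ^ 2 := by
      intro ω
      have h1 : (sarahState f w0 η b (pad ω) (t+1)).1
          = (sarahState f w0 η b (pad ω) t).1 - η • (sarahState f w0 η b (pad ω) t).2 := rfl
      rw [h1]
      exact descent_step hL hη hd1 hlip _ _
    calc Φ (t+1) ≤ ∑ ω : Fin (m+1) → Batch n b, (P ((sarahState f w0 η b (pad ω) t).1)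
            - η/2 * ‖gradient P ((sarahState f w0 η b (pad ω) t).1)‖ ^ 2
            + η/2 * ‖gradient P ((sarahState f w0 η b (pad ω) t).1)
                - (sarahState f w0 η b (pad ω) t).2‖ ^ 2
            - η/2 * (1 - L*η) * ‖(sarahState f w0 η b (pad ω) t).2‖ ^ 2) :=
        Finset.sum_le_sum fun ω _ => hstep ω
      _ = Φ t - η/2 * gq t + η/2 * A t - η/2 * (1 - L*η) * u t := by
        rw [hΦ, hgq, hA, hu]
        simp only [Finset.sum_sub_distrib, Finset.sum_add_distrib, ← Finset.mul_sum]
  have htel : Φ (m+1) - Φ 0 ≤ - (η/2) * Sg + (η/2) * ∑ t ∈ Finset.range (m+1), A t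
      - (η/2) * ((1 - L*η) * Su) := by
    have h1 : Φ (m+1) - Φ 0 = ∑ t ∈ Finset.range (m+1), (Φ (t+1) - Φ t) :=
      (Finset.sum_range_sub Φ (m+1)).symm
    rw [h1, hSg, hSu]
    calc ∑ t ∈ Finset.range (m+1), (Φ (t+1) - Φ t)
        ≤ ∑ t ∈ Finset.range (m+1),
            (- (η/2) * gq t + (η/2) * A t - (η/2) * ((1 - L*η) * u t)) :=
          Finset.sum_le_sum fun t _ => by linarith [hdesc t]
      _ = _ := by
          simp only [Finset.sum_sub_distrib, Finset.sum_add_distrib, ← Finset.mul_sum]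
  have hη2' : η ≤ 2 / (L * (Real.sqrt (1 + 4 * (m:ℝ) * ρ0) + 1)) := by
    have heq : (1:ℝ) + 4 * (m:ℝ) * ρ0
        = 1 + 4 * (m : ℝ) / (b : ℝ) * (((n : ℝ) - (b : ℝ)) / ((n : ℝ) - 1)) := by
      have hbne : (b:ℝ) ≠ 0 := by positivity
      have hn1ne : (n:ℝ) - 1 ≠ 0 := ne_of_gt (by linarith)
      rw [hρ0def]
      field_simp
    rw [heq]
    exact hη2
  have hcond : c * m ≤ 1 - L * η := by
    have h := eta_cond hL hη hρ0 m hη2'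
    rw [hcdef]
    linarith [h]
  have hkey : η/2 * Sg ≤ Φ 0 - Φ (m+1) := by
    have e1 : (η/2) * (∑ t ∈ Finset.range (m+1), A t) ≤ (η/2) * (c * m * Su) :=
      mul_le_mul_of_nonneg_left hAsum (by positivity)
    have e2 : c * m * Su ≤ (1 - L*η) * Su :=
      mul_le_mul_of_nonneg_right hcond hSu_nn
    have e3 : (η/2) * (c * m * Su) ≤ (η/2) * ((1 - L*η) * Su) :=
      mul_le_mul_of_nonneg_left e2 (by positivity)
    linarith [htel, e1, e3]
  set M : ℕ := Fintype.card (Fin (m+1) → Batch n b) with hM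
  have hMpos : 0 < M := by
    rw [hM]
    apply Fintype.card_pos_iff.2
    obtain ⟨s0s, _, hs0⟩ := Finset.exists_subset_card_eq (s := (univ : Finset (Fin n))) (n := b)
      (by simpa using hbn)
    exact ⟨fun _ => ⟨s0s, hs0⟩⟩
  have hΦ0 : Φ 0 = (M:ℝ) * P w0 := by
    rw [hΦ]
    simp only
    rw [show (∑ ω : Fin (m+1) → Batch n b, P ((sarahState f w0 η b (pad ω) 0).1))
        = ∑ _ω : Fin (m+1) → Batch n b, P w0 from rfl,
      Finset.sum_const, Finset.card_univ, nsmul_eq_mul, hM]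
  have hΦm : (M:ℝ) * P wstar ≤ Φ (m+1) := by
    rw [hΦ]
    calc (M:ℝ) * P wstar = ∑ _ω : Fin (m+1) → Batch n b, P wstar := by
          rw [Finset.sum_const, Finset.card_univ, nsmul_eq_mul, hM]
      _ ≤ _ := Finset.sum_le_sum fun ω _ => hmin _
  have hSgle : Sg ≤ 2/η * ((M:ℝ) * (τ * ‖gradient P w0‖ ^ 2)) := by
    have h1 : η/2 * Sg ≤ (M:ℝ) * (P w0 - P wstar) := by
      have : Φ 0 - Φ (m+1) ≤ (M:ℝ) * (P w0 - P wstar) := by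
        rw [hΦ0]
        linarith [hΦm, mul_sub (M:ℝ) (P w0) (P wstar)]
      linarith [hkey]
    have h2 : (M:ℝ) * (P w0 - P wstar) ≤ (M:ℝ) * (τ * ‖gradient P w0‖^2) :=
      mul_le_mul_of_nonneg_left (hdom w0) (by positivity)
    calc Sg = 2/η * (η/2 * Sg) := by field_simp
      _ ≤ 2/η * ((M:ℝ) * (τ * ‖gradient P w0‖^2)) := by
          apply mul_le_mul_of_nonneg_left _ (by positivity)
          linarith [h1, h2]
  unfold expec
  have hcard : (Fintype.card ((Fin (m+1) → Batch n b) × Fin (m+1)) : ℝ)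
      = (M:ℝ) * ((m:ℝ)+1) := by
    rw [Fintype.card_prod, Fintype.card_fin, hM]
    push_cast
    ring
  have hsum3 : ∑ p : (Fin (m+1) → Batch n b) × Fin (m+1),
      ‖gradient P ((sarahState f w0 η b (pad p.1) (p.2:ℕ)).1)‖ ^ 2 = Sg := by
    rw [Fintype.sum_prod_type, hSg]
    rw [Finset.sum_congr rfl (fun ω (_ : ω ∈ Finset.univ) => Fin.sum_univ_eq_sum_range
      (fun t => ‖gradient P ((sarahState f w0 η b (pad ω) t).1)‖ ^ 2) (m+1))]
    rw [Finset.sum_comm]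
  rw [hcard, hsum3]
  have hMr : (0:ℝ) < (M:ℝ) := by exact_mod_cast hMpos
  calc ((M:ℝ) * ((m:ℝ)+1))⁻¹ * Sg
      ≤ ((M:ℝ) * ((m:ℝ)+1))⁻¹ * (2/η * ((M:ℝ) * (τ * ‖gradient P w0‖ ^ 2))) := by
        apply mul_le_mul_of_nonneg_left hSgle (by positivity)
    _ = 2 * τ / (η * ((m:ℝ)+1)) * ‖gradient P w0‖ ^ 2 := by
        field_simp
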